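/- Fix p ≥ 1 and 0 < δ ≤ 1. Then (1/(2p(n-p))) · log(c_{n,p,2} δ^{2p(n-p)}) → log(δ/√p) as n → ∞, where c_{n,p,2} = (1/(np-p²)!) ∏_{i=1}^{p} (n-i)!/(p-i)!. Equivalently, c_{n,p,2} δ^{2p(n-p)} = (δ/√p)^{2p(n-p) + o(n)}. -/

import Mathlib

open Finset Filter Real

noncomputable def Efn (n : ℕ) : ℝ := Real.log n.factorial - ((n : ℝ) * Real.log n - n)

lemma log_div_nat_tendsto : Tendsto (fun n : ℕ => Real.log n / n) atTop (nhds 0) :=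
  Real.isLittleO_log_id_atTop.tendsto_div_nhds_zero.comp tendsto_natCast_atTop_atTop

lemma Efn_eq {n : ℕ} (hn : 1 ≤ n) :
    Efn n = Real.log (Stirling.stirlingSeq n) + Real.log (2 * n) / 2 := by
  have hn0 : (0 : ℝ) < n := by exact_mod_cast hn
  rw [Stirling.log_stirlingSeq_formula, Real.log_div (ne_of_gt hn0) (Real.exp_ne_zero 1),
    Real.log_exp, Efn]
  ring

lemma Efn_div_tendsto : Tendsto (fun n : ℕ => Efn n / n) atTop (nhds 0) := by
  have h1 : Tendsto (fun n : ℕ => Real.log (Stirling.stirlingSeq n)) atTop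
      (nhds (Real.log (Real.sqrt π))) := by
    have := (Real.continuousAt_log (by positivity : Real.sqrt π ≠ 0)).tendsto.comp
      Stirling.tendsto_stirlingSeq_sqrt_pi
    exact this
  have h2 : Tendsto (fun n : ℕ => Real.log (Stirling.stirlingSeq n) / n) atTop (nhds 0) :=
    h1.div_atTop tendsto_natCast_atTop_atTop
  have h3 : Tendsto (fun n : ℕ => Real.log (2 * n) / (2 * n)) atTop (nhds 0) := by
    refine Real.isLittleO_log_id_atTop.tendsto_div_nhds_zero.comp ?_
    exact Tendsto.const_mul_atTop two_pos tendsto_natCast_atTop_atTop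
  have h4 : Tendsto (fun n : ℕ => Real.log (Stirling.stirlingSeq n) / n
      + Real.log (2 * n) / (2 * n)) atTop (nhds 0) := by
    simpa using h2.add h3
  refine h4.congr' ?_
  filter_upwards [eventually_ge_atTop 1] with n hn
  have hn0 : (0 : ℝ) < n := by exact_mod_cast hn
  rw [Efn_eq hn]
  field_simp

lemma ratio_tendsto (k : ℕ) : Tendsto (fun m : ℕ => ((m : ℝ) + k) / m) atTop (nhds 1) := by
  have h : Tendsto (fun m : ℕ => 1 + (k : ℝ) / m) atTop (nhds 1) := by
    simpa using tendsto_const_nhds.add (tendsto_const_div_atTop_nhds_zero_nat (k : ℝ))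
  refine h.congr' ?_
  filter_upwards [eventually_ge_atTop 1] with m hm
  have hm0 : (0 : ℝ) < m := by exact_mod_cast hm
  field_simp

lemma cancel_helper (E b c : ℝ) (hb : b ≠ 0) : E / b * (b / c) = E / c := by
  rw [div_mul_div_comm, mul_comm E b, mul_div_mul_left _ _ hb]

lemma keyG (p k : ℕ) (hp : 1 ≤ p) :
    Tendsto (fun m : ℕ =>
        (Real.log ((m + k).factorial) - Real.log ((p * m).factorial) / p) / (2 * p * m))
      atTop (nhds (-Real.log p / (2 * p))) := by
  have hp0 : (0 : ℝ) < p := by exact_mod_cast hp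
  -- piece limits
  have l1 : Tendsto (fun m : ℕ => Real.log (1 + (k : ℝ) / m) / (2 * p)) atTop (nhds 0) := by
    have h : Tendsto (fun m : ℕ => 1 + (k : ℝ) / m) atTop (nhds 1) := by
      simpa using tendsto_const_nhds.add (tendsto_const_div_atTop_nhds_zero_nat (k : ℝ))
    have := ((Real.continuousAt_log one_ne_zero).tendsto.comp h).div_const (2 * (p : ℝ))
    simpa using this
  have loga : Tendsto (fun m : ℕ => Real.log ((m : ℝ) + k) / ((m : ℝ) + k)) atTop (nhds 0) := by
    refine Real.isLittleO_log_id_atTop.tendsto_div_nhds_zero.comp ?_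
    exact tendsto_atTop_add_const_right _ _ tendsto_natCast_atTop_atTop
  have l2 : Tendsto (fun m : ℕ => (k : ℝ) * Real.log ((m : ℝ) + k) / (2 * p * m))
      atTop (nhds 0) := by
    have h := ((loga.mul (ratio_tendsto k)).const_mul ((k : ℝ) / (2 * p)))
    norm_num at h
    refine h.congr' ?_
    filter_upwards [eventually_ge_atTop 1] with m hm
    have hm0 : (0 : ℝ) < m := by exact_mod_cast hm
    have hmk : (0 : ℝ) < (m : ℝ) + k := by positivity
    rw [cancel_helper _ _ _ hmk.ne']
    ring
  have l3 : Tendsto (fun m : ℕ => (k : ℝ) / (2 * p * m)) atTop (nhds 0) := by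
    have := tendsto_const_div_atTop_nhds_zero_nat ((k : ℝ) / (2 * p))
    refine this.congr fun m => ?_
    rw [div_div]
  have l4 : Tendsto (fun m : ℕ => Efn (m + k) / (2 * p * m)) atTop (nhds 0) := by
    have hE : Tendsto (fun m : ℕ => Efn (m + k) / ((m : ℝ) + k)) atTop (nhds 0) := by
      have := Efn_div_tendsto.comp (tendsto_add_atTop_nat k)
      refine this.congr fun m => ?_
      simp [Function.comp]
    have h := ((hE.mul (ratio_tendsto k)).const_mul ((1 : ℝ) / (2 * p)))
    norm_num at h
    refine h.congr' ?_
    filter_upwards [eventually_ge_atTop 1] with m hm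
    have hm0 : (0 : ℝ) < m := by exact_mod_cast hm
    have hmk : (0 : ℝ) < (m : ℝ) + k := by positivity
    rw [cancel_helper _ _ _ hmk.ne']
    ring
  have l5 : Tendsto (fun m : ℕ => Efn (p * m) / (2 * p ^ 2 * m)) atTop (nhds 0) := by
    have hpm : Tendsto (fun m : ℕ => p * m) atTop atTop :=
      tendsto_atTop_mono (fun m => Nat.le_mul_of_pos_left m hp) tendsto_id
    have hE := (Efn_div_tendsto.comp hpm).const_mul ((1 : ℝ) / (2 * p))
    rw [mul_zero] at hE
    refine hE.congr' ?_
    filter_upwards [eventually_ge_atTop 1] with m hm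
    have hm0 : (0 : ℝ) < m := by exact_mod_cast hm
    simp only [Function.comp]
    push_cast
    ring
  -- assemble
  have total : Tendsto (fun m : ℕ =>
      Real.log (1 + (k : ℝ) / m) / (2 * p) + (k : ℝ) * Real.log ((m : ℝ) + k) / (2 * p * m)
        - Real.log p / (2 * p) - (k : ℝ) / (2 * p * m)
        + Efn (m + k) / (2 * p * m) - Efn (p * m) / (2 * p ^ 2 * m))
      atTop (nhds (-Real.log p / (2 * p))) := by
    have lc : Tendsto (fun _ : ℕ => Real.log p / (2 * (p : ℝ))) atTop
        (nhds (Real.log p / (2 * p))) := tendsto_const_nhds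
    have := ((((l1.add l2).sub lc).sub l3).add l4).sub l5
    convert this using 2
    ring
  refine total.congr' ?_
  filter_upwards [eventually_ge_atTop 1] with m hm
  have hm0 : (0 : ℝ) < m := by exact_mod_cast hm
  have hmk : (0 : ℝ) < (m : ℝ) + k := by positivity
  have e1 : Real.log ((m + k).factorial)
      = ((m : ℝ) + k) * Real.log ((m : ℝ) + k) - ((m : ℝ) + k) + Efn (m + k) := by
    unfold Efn; push_cast; ring
  have e2 : Real.log ((p * m).factorial)
      = (p : ℝ) * m * (Real.log p + Real.log m) - (p : ℝ) * m + Efn (p * m) := by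
    unfold Efn; push_cast
    rw [Real.log_mul hp0.ne' hm0.ne']; ring
  have e3 : Real.log (1 + (k : ℝ) / m) = Real.log ((m : ℝ) + k) - Real.log m := by
    rw [show (1 : ℝ) + (k : ℝ) / m = ((m : ℝ) + k) / m by field_simp,
      Real.log_div hmk.ne' hm0.ne']
  rw [e1, e2, e3]
  field_simp
  ring

/-- Fix `p ≥ 1` and `0 < δ ≤ 1`. With
`c_{n,p,2} = (1/(np-p²)!) ∏_{i=1}^{p} (n-i)!/(p-i)!`, we have
`(1/(2p(n-p))) · log(c_{n,p,2} δ^{2p(n-p)}) → log(δ/√p)` as `n → ∞`;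
equivalently `c_{n,p,2} δ^{2p(n-p)} = (δ/√p)^{2p(n-p)+o(n)}`. -/
theorem stmt5 (p : ℕ) (hp : 1 ≤ p) (δ : ℝ) (hδ0 : 0 < δ) (hδ1 : δ ≤ 1) :
    Tendsto (fun n : ℕ =>
        (1 / (2 * (p : ℝ) * ((n : ℝ) - p))) *
          Real.log ((1 / (Nat.factorial (n * p - p ^ 2) : ℝ)) *
            (∏ i ∈ Finset.Icc 1 p,
              ((Nat.factorial (n - i) : ℝ) / (Nat.factorial (p - i) : ℝ))) *
            δ ^ (2 * p * (n - p))))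
      atTop (nhds (Real.log (δ / Real.sqrt p))) := by
  have hp0 : (0 : ℝ) < p := by exact_mod_cast hp
  set C : ℝ := ∑ i ∈ Icc 1 p, Real.log ((p - i).factorial) with hCdef
  have hsum : Tendsto (fun m : ℕ => ∑ i ∈ Icc 1 p,
      (Real.log ((m + (p - i)).factorial) - Real.log ((p * m).factorial) / p) / (2 * p * m))
      atTop (nhds ((p : ℝ) * (-Real.log p / (2 * p)))) := by
    have h := tendsto_finset_sum (Icc 1 p)
      (fun i (_ : i ∈ Icc 1 p) => keyG p (p - i) hp)
    simpa [Finset.sum_const, Nat.card_Icc, nsmul_eq_mul] using h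
  have hC : Tendsto (fun m : ℕ => C / (2 * p * m)) atTop (nhds 0) := by
    have := tendsto_const_div_atTop_nhds_zero_nat (C / (2 * p))
    refine this.congr fun m => ?_
    rw [div_div]
  have hF : Tendsto (fun m : ℕ => Real.log δ + (∑ i ∈ Icc 1 p,
      (Real.log ((m + (p - i)).factorial) - Real.log ((p * m).factorial) / p) / (2 * p * m))
      - C / (2 * p * m)) atTop (nhds (Real.log (δ / Real.sqrt p))) := by
    have hc0 : Tendsto (fun _ : ℕ => Real.log δ) atTop (nhds (Real.log δ)) :=
      tendsto_const_nhds
    have h := (hc0.add hsum).sub hC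
    have hv : Real.log δ + (p : ℝ) * (-Real.log p / (2 * p)) - 0
        = Real.log (δ / Real.sqrt p) := by
      rw [Real.log_div hδ0.ne' (Real.sqrt_ne_zero'.2 hp0),
        Real.log_sqrt (le_of_lt hp0)]
      field_simp
      ring
    rwa [hv] at h
  refine ((hF.comp (tendsto_sub_atTop_nat p)).congr' ?_)
  filter_upwards [eventually_ge_atTop (p + 1)] with n hn
  set m : ℕ := n - p with hmdef
  have hpn : p ≤ n := le_trans (Nat.le_succ p) hn
  have hm1 : 1 ≤ m := by omega
  have hm0 : (0 : ℝ) < m := by exact_mod_cast hm1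
  have hcast : ((m : ℕ) : ℝ) = (n : ℝ) - p := by
    rw [hmdef]; push_cast [hpn]; ring
  have hnp : n * p - p ^ 2 = p * m := by
    rw [hmdef, pow_two, mul_comm p (n - p), Nat.sub_mul]
  -- expand the logarithm
  have hfac : ∀ i ∈ Icc 1 p, n - i = m + (p - i) := by
    intro i hi
    simp only [mem_Icc] at hi
    omega
  have hargs : ∀ i ∈ Icc 1 p,
      ((Nat.factorial (n - i) : ℝ) / (Nat.factorial (p - i) : ℝ)) ≠ 0 := by
    intro i _
    positivity
  have hlogprod : Real.log (∏ i ∈ Icc 1 p,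
      ((Nat.factorial (n - i) : ℝ) / (Nat.factorial (p - i) : ℝ)))
      = (∑ i ∈ Icc 1 p, Real.log ((m + (p - i)).factorial)) - C := by
    rw [Real.log_prod hargs, hCdef, ← Finset.sum_sub_distrib]
    refine Finset.sum_congr rfl fun i hi => ?_
    rw [Real.log_div (by positivity) (by positivity), hfac i hi]
  have hb : (∏ i ∈ Icc 1 p,
      ((Nat.factorial (n - i) : ℝ) / (Nat.factorial (p - i) : ℝ))) ≠ 0 :=
    Finset.prod_ne_zero_iff.2 hargs
  have hexp : Real.log ((1 / (Nat.factorial (n * p - p ^ 2) : ℝ)) *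
      (∏ i ∈ Icc 1 p, ((Nat.factorial (n - i) : ℝ) / (Nat.factorial (p - i) : ℝ))) *
      δ ^ (2 * p * (n - p)))
      = -Real.log ((p * m).factorial)
        + ((∑ i ∈ Icc 1 p, Real.log ((m + (p - i)).factorial)) - C)
        + (2 * p * m) * Real.log δ := by
    rw [Real.log_mul (by rw [hnp]; positivity) (by positivity),
      Real.log_mul (by rw [hnp]; positivity) hb, hlogprod, Real.log_pow, hnp,
      one_div, Real.log_inv, ← hmdef]
    push_cast
    ring
  simp only [Function.comp]
  rw [← hmdef, hexp, hcast.symm]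
  -- now a pure algebraic identity
  rw [← Finset.sum_div, Finset.sum_sub_distrib, Finset.sum_const, Nat.card_Icc,
    Nat.add_sub_cancel, nsmul_eq_mul]
  have h2pm : (2 : ℝ) * p * m ≠ 0 := by positivity
  field_simp
  ring
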